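/- arXiv:1312.6012 — 4 statements merged into one kernel-verified Lean document; each statement's English description precedes it below -/
import Mathlib

section
/- Let T ≥ 0, B > 0 and ε > 0 be real numbers. Let f, r : ℝ → ℝ be functions differentiable on [0,T] such that for all s ∈ [0,T]: 0 ≤ f(s) ≤ 2ε, |r'(s)| ≤ B·f(s)³, and |f'(s)| ≤ r(s), and such that r(0) ≤ ε² and f(0) ≤ ε. Then f(t) ≤ ε + ε²·t + 4Bε³·t² for all t ∈ [0,T]. -/
/-- Quadratic upper bound on `f` from the proof of the shadowing lemma (Lemma 2.5):
if on `[0,T]` one has `0 ≤ f ≤ 2ε`, `|r'| ≤ B·f³`, `|f'| ≤ r`, with `r(0) ≤ ε²` and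
`f(0) ≤ ε`, then `f(t) ≤ ε + ε²·t + 4Bε³·t²` on `[0,T]`. -/
theorem quadratic_bound_for_f
    (T B ε : ℝ) (hT : 0 ≤ T) (hB : 0 < B) (hε : 0 < ε)
    (f r f' r' : ℝ → ℝ)
    (hfderiv : ∀ s ∈ Set.Icc (0:ℝ) T, HasDerivWithinAt f (f' s) (Set.Icc 0 T) s)
    (hrderiv : ∀ s ∈ Set.Icc (0:ℝ) T, HasDerivWithinAt r (r' s) (Set.Icc 0 T) s)
    (hf : ∀ s ∈ Set.Icc (0:ℝ) T, 0 ≤ f s ∧ f s ≤ 2 * ε)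
    (hr' : ∀ s ∈ Set.Icc (0:ℝ) T, |r' s| ≤ B * f s ^ 3)
    (hf' : ∀ s ∈ Set.Icc (0:ℝ) T, |f' s| ≤ r s)
    (hr0 : r 0 ≤ ε ^ 2) (hf0 : f 0 ≤ ε) :
    ∀ t ∈ Set.Icc (0:ℝ) T, f t ≤ ε + ε ^ 2 * t + 4 * B * ε ^ 3 * t ^ 2 := by
  have hIcc : Convex ℝ (Set.Icc (0:ℝ) T) := convex_Icc 0 T
  have hint : interior (Set.Icc (0:ℝ) T) ⊆ Set.Icc (0:ℝ) T := interior_subset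
  -- Step 1: r t ≤ ε² + 8Bε³ t on [0,T]
  have hrbound : ∀ t ∈ Set.Icc (0:ℝ) T, r t ≤ ε ^ 2 + 8 * B * ε ^ 3 * t := by
    have hanti : AntitoneOn (fun t => r t - 8 * B * ε ^ 3 * t) (Set.Icc 0 T) := by
      apply antitoneOn_of_hasDerivWithinAt_nonpos hIcc
        (f' := fun t => r' t - 8 * B * ε ^ 3)
      · intro s hs
        exact ((hrderiv s hs).sub
          ((hasDerivWithinAt_id s _).const_mul (8 * B * ε ^ 3))).continuousWithinAt
      · intro x hx
        have h := ((hrderiv x (hint hx)).mono hint).sub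
          ((hasDerivWithinAt_id x (interior (Set.Icc (0:ℝ) T))).const_mul (8 * B * ε ^ 3))
        exact h.congr_deriv (by ring)
      · intro x hx
        have hx' := hint hx
        have h2 := hf x hx'
        have h3 : f x ^ 3 ≤ (2 * ε) ^ 3 := pow_le_pow_left₀ h2.1 h2.2 3
        have h4 := (abs_le.mp (hr' x hx')).2
        nlinarith [hB.le]
    intro t ht
    have := hanti (Set.left_mem_Icc.mpr hT) ht ht.1
    simp only [mul_zero, sub_zero] at this
    linarith
  -- Step 2: f t - (ε² t + 4Bε³ t²) is antitone
  have hanti2 : AntitoneOn (fun t => f t - (ε ^ 2 * t + 4 * B * ε ^ 3 * t ^ 2))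
      (Set.Icc 0 T) := by
    apply antitoneOn_of_hasDerivWithinAt_nonpos hIcc
      (f' := fun t => f' t - (ε ^ 2 + 8 * B * ε ^ 3 * t))
    · intro s hs
      exact ((hfderiv s hs).sub (((hasDerivWithinAt_id s _).const_mul (ε ^ 2)).add
        (((hasDerivWithinAt_id s _).pow 2).const_mul (4 * B * ε ^ 3)))).continuousWithinAt
    · intro x hx
      have h := ((hfderiv x (hint hx)).mono hint).sub
        (((hasDerivWithinAt_id x (interior (Set.Icc (0:ℝ) T))).const_mul (ε ^ 2)).add
          (((hasDerivWithinAt_id x (interior (Set.Icc (0:ℝ) T))).pow 2).const_mul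
            (4 * B * ε ^ 3)))
      exact h.congr_deriv (by simp; ring)
    · intro x hx
      have hx' := hint hx
      have h1 := (abs_le.mp (hf' x hx')).2
      have h2 := hrbound x hx'
      linarith
  intro t ht
  have h := hanti2 (Set.left_mem_Icc.mpr hT) ht ht.1
  simp only at h
  nlinarith [h]
end

section
/- Let B > 1/4 and ε > 0 be real numbers. Let f, r : ℝ → ℝ be differentiable on [0,∞) with f(0) ≤ ε, r(0) ≤ ε², f(s) ≥ 0 for all s ≥ 0, and suppose that for all s ≥ 0 one has |f'(s)| ≤ r(s) and |r'(s)| ≤ B·f(s)³. Then f(t) ≤ 2ε for all t ∈ [0, 1/(8Bε)]. -/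
/-- Analytic core of the shadowing lemma (Lemma 2.5): if `f, r` are differentiable
on `[0,∞)` with `f(0) ≤ ε`, `r(0) ≤ ε²`, `f ≥ 0`, `|f'| ≤ r` and `|r'| ≤ B·f³` on `[0,∞)`,
and `B > 1/4`, then `f(t) ≤ 2ε` for all `t ∈ [0, 1/(8Bε)]`. -/
theorem shadowing_lemma_f_bound
    (B ε : ℝ) (hB : 1/4 < B) (hε : 0 < ε)
    (f r f' r' : ℝ → ℝ)
    (hfderiv : ∀ s ∈ Set.Ici (0:ℝ), HasDerivWithinAt f (f' s) (Set.Ici 0) s)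
    (hrderiv : ∀ s ∈ Set.Ici (0:ℝ), HasDerivWithinAt r (r' s) (Set.Ici 0) s)
    (hf0 : f 0 ≤ ε) (hr0 : r 0 ≤ ε ^ 2)
    (hfpos : ∀ s ∈ Set.Ici (0:ℝ), 0 ≤ f s)
    (hf' : ∀ s ∈ Set.Ici (0:ℝ), |f' s| ≤ r s)
    (hr' : ∀ s ∈ Set.Ici (0:ℝ), |r' s| ≤ B * f s ^ 3) :
    ∀ t ∈ Set.Icc (0:ℝ) (1 / (8 * B * ε)), f t ≤ 2 * ε := by
  have hB0 : (0:ℝ) < B := lt_trans (by norm_num) hB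
  set T : ℝ := 1 / (8 * B * ε) with hT_def
  have hTpos : 0 < T := by positivity
  have hTmul : 8 * B * ε * T = 1 := by
    rw [hT_def]; field_simp
  -- key quantitative estimate
  have key : ∀ t ∈ Set.Icc (0:ℝ) T, (∀ u ∈ Set.Icc (0:ℝ) t, f u ≤ 2 * ε) →
      f t < 2 * ε := by
    intro t ht hbound
    have ht0 : (0:ℝ) ≤ t := ht.1
    have htT : t ≤ T := ht.2
    -- bound r on [0, t]
    have hr_bound : ∀ u ∈ Set.Icc (0:ℝ) t, r u ≤ 2 * ε ^ 2 := by
      intro u hu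
      have hru : ‖r u - r 0‖ ≤ (8 * B * ε ^ 3) * (u - 0) := by
        apply norm_image_sub_le_of_norm_deriv_le_segment'
          (f' := r') (fun x hx => (hrderiv x hx.1).mono
            (Set.Icc_subset_Ici_self)) _ u hu
        intro x hx
        have hx' : x ∈ Set.Icc (0:ℝ) t := ⟨hx.1, le_of_lt hx.2⟩
        have h1 : |r' x| ≤ B * f x ^ 3 := hr' x hx'.1
        have h2 : f x ^ 3 ≤ (2 * ε) ^ 3 :=
          pow_le_pow_left₀ (hfpos x hx'.1) (hbound x hx') 3
        calc ‖r' x‖ ≤ B * f x ^ 3 := h1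
          _ ≤ B * (2 * ε) ^ 3 := by nlinarith
          _ = 8 * B * ε ^ 3 := by ring
      have : r u - r 0 ≤ (8 * B * ε ^ 3) * u := by
        simpa using (le_trans (le_abs_self _) hru)
      have huT : u ≤ T := le_trans hu.2 htT
      have h3 : (8 * B * ε ^ 3) * u ≤ ε ^ 2 := by
        have : (8 * B * ε ^ 3) * u ≤ (8 * B * ε ^ 3) * T := by
          apply mul_le_mul_of_nonneg_left huT; positivity
        calc (8 * B * ε ^ 3) * u ≤ (8 * B * ε ^ 3) * T := this
          _ = (8 * B * ε * T) * ε ^ 2 := by ring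
          _ = ε ^ 2 := by rw [hTmul]; ring
      nlinarith
    -- bound f via derivative
    have hfu : ‖f t - f 0‖ ≤ (2 * ε ^ 2) * (t - 0) := by
      apply norm_image_sub_le_of_norm_deriv_le_segment'
        (f' := f') (fun x hx => (hfderiv x hx.1).mono
          (Set.Icc_subset_Ici_self)) _ t (Set.right_mem_Icc.2 ht0)
      intro x hx
      have hx' : x ∈ Set.Icc (0:ℝ) t := ⟨hx.1, le_of_lt hx.2⟩
      exact le_trans (hf' x hx'.1) (hr_bound x hx')
    have h4 : f t - f 0 ≤ 2 * ε ^ 2 * t := by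
      simpa using le_trans (le_abs_self _) hfu
    have h5 : 2 * ε ^ 2 * t ≤ 2 * ε ^ 2 * T := by
      apply mul_le_mul_of_nonneg_left htT; positivity
    have h6 : 2 * ε ^ 2 * T < ε := by
      have : 2 * ε ^ 2 * T = (8 * B * ε * T) * (ε / (4 * B)) := by
        field_simp; ring
      rw [this, hTmul, one_mul]
      rw [div_lt_iff₀ (by positivity)]
      nlinarith
    linarith
  -- continuity of f on Ici 0
  have hfc : ContinuousOn f (Set.Ici 0) := fun x hx =>
    (hfderiv x hx).continuousWithinAt
  -- bootstrap via first bad time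
  by_contra hcon
  push_neg at hcon
  obtain ⟨t₁, ht₁, hft₁⟩ := hcon
  set S : Set ℝ := {t | t ∈ Set.Icc (0:ℝ) T ∧ 2 * ε < f t} with hS_def
  have hSne : S.Nonempty := ⟨t₁, ht₁, hft₁⟩
  have hSbdd : BddBelow S := ⟨0, fun x hx => hx.1.1⟩
  set t₀ : ℝ := sInf S with ht₀_def
  have ht₀0 : 0 ≤ t₀ := le_csInf hSne (fun x hx => hx.1.1)
  have ht₀T : t₀ ≤ T := csInf_le_of_le hSbdd (show t₁ ∈ S from ⟨ht₁, hft₁⟩) ht₁.2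
  -- f ≤ 2ε strictly before t₀
  have hbefore : ∀ u, 0 ≤ u → u < t₀ → f u ≤ 2 * ε := by
    intro u hu0 hu
    by_contra h
    push_neg at h
    have : u ∈ S := ⟨⟨hu0, le_trans (le_of_lt hu) ht₀T⟩, h⟩
    exact absurd (csInf_le hSbdd this) (not_le.2 hu)
  -- f t₀ ≥ 2ε by continuity (t₀ ∈ closure S)
  have hclos : t₀ ∈ closure S := csInf_mem_closure hSne hSbdd
  have hge : 2 * ε ≤ f t₀ := by
    have hc : ContinuousWithinAt f S t₀ :=
      (hfc t₀ ht₀0).mono (fun x hx => hx.1.1)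
    have htd : Filter.Tendsto f (nhdsWithin t₀ S) (nhds (f t₀)) := hc
    have hne : (nhdsWithin t₀ S).NeBot := mem_closure_iff_nhdsWithin_neBot.1 hclos
    exact ge_of_tendsto htd (Filter.eventually_of_mem self_mem_nhdsWithin
      (fun x hx => le_of_lt hx.2))
  -- f t₀ ≤ 2ε
  have hle : f t₀ ≤ 2 * ε := by
    rcases eq_or_lt_of_le ht₀0 with h0 | hpos
    · rw [← h0]; linarith
    · have hc : ContinuousWithinAt f (Set.Ico 0 t₀) t₀ :=
        (hfc t₀ ht₀0).mono (fun x hx => hx.1)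
      have hclos' : t₀ ∈ closure (Set.Ico 0 t₀) := by
        rw [closure_Ico (ne_of_lt hpos)]
        exact Set.right_mem_Icc.2 (le_of_lt hpos)
      have hne : (nhdsWithin t₀ (Set.Ico 0 t₀)).NeBot :=
        mem_closure_iff_nhdsWithin_neBot.1 hclos'
      exact le_of_tendsto hc (Filter.eventually_of_mem self_mem_nhdsWithin
        (fun x hx => hbefore x hx.1 hx.2))
  -- apply key at t₀
  have hlt : f t₀ < 2 * ε := by
    apply key t₀ ⟨ht₀0, ht₀T⟩
    intro u hu
    rcases eq_or_lt_of_le hu.2 with h | h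
    · rw [h]; exact hle
    · exact hbefore u hu.1 h
  linarith
end

section
/- Let B > 1/4 and ε > 0 be real numbers. Let f, r : ℝ → ℝ be differentiable on [0,∞) with f(0) ≤ ε, r(0) ≤ ε², f(s) ≥ 0 for all s ≥ 0, and suppose that for all s ≥ 0 one has |f'(s)| ≤ r(s) and |r'(s)| ≤ B·f(s)³. Then r(t) ≤ 2ε² for all t ∈ [0, 1/(8Bε)]. -/
/-- Strengthening of the shadowing lemma (Lemma 2.5): under the Clairaut-type
differential inequalities `|f'| ≤ r` and `|r'| ≤ B·f³` on `[0,∞)` with `f ≥ 0`,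
`f(0) ≤ ε`, `r(0) ≤ ε²` and `B > 1/4`, one has `r(t) ≤ 2ε²` for all `t ∈ [0, 1/(8Bε)]`. -/
theorem shadowing_lemma_r_bound
    (B ε : ℝ) (hB : 1/4 < B) (hε : 0 < ε)
    (f r f' r' : ℝ → ℝ)
    (hfderiv : ∀ s ∈ Set.Ici (0:ℝ), HasDerivWithinAt f (f' s) (Set.Ici 0) s)
    (hrderiv : ∀ s ∈ Set.Ici (0:ℝ), HasDerivWithinAt r (r' s) (Set.Ici 0) s)
    (hf0 : f 0 ≤ ε) (hr0 : r 0 ≤ ε ^ 2)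
    (hfpos : ∀ s ∈ Set.Ici (0:ℝ), 0 ≤ f s)
    (hf' : ∀ s ∈ Set.Ici (0:ℝ), |f' s| ≤ r s)
    (hr' : ∀ s ∈ Set.Ici (0:ℝ), |r' s| ≤ B * f s ^ 3) :
    ∀ t ∈ Set.Icc (0:ℝ) (1 / (8 * B * ε)), r t ≤ 2 * ε ^ 2 := by
  have hB0 : (0:ℝ) < B := lt_trans (by norm_num) hB
  set T : ℝ := 1 / (8 * B * ε) with hTdef
  have hT : 0 < T := by positivity
  have hTmul : 8 * B * ε ^ 3 * T = ε ^ 2 := by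
    rw [hTdef]; field_simp
  -- Gronwall bound for r, conditional on f ≤ 2ε strictly before t
  have rbound : ∀ t ∈ Set.Icc (0:ℝ) T,
      (∀ s ∈ Set.Ico (0:ℝ) t, f s ≤ 2 * ε) → r t ≤ 2 * ε ^ 2 := by
    intro t ht hfle
    have hkey := norm_image_sub_le_of_norm_deriv_le_segment'
      (f := r) (f' := r') (a := 0) (b := t) (C := 8 * B * ε ^ 3)
      (fun x hx => (hrderiv x hx.1).mono (fun y hy => hy.1))
      (fun x hx => by
        have h1 := hr' x hx.1
        have h2 : f x ≤ 2 * ε := hfle x hx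
        have h3 : 0 ≤ f x := hfpos x hx.1
        calc ‖r' x‖ = |r' x| := rfl
          _ ≤ B * f x ^ 3 := h1
          _ ≤ 8 * B * ε ^ 3 := by
              have h4 : f x ^ 3 ≤ (2 * ε) ^ 3 := pow_le_pow_left₀ h3 h2 3
              nlinarith [h4]
        ) t ⟨ht.1, le_refl t⟩
    have h4 : |r t - r 0| ≤ 8 * B * ε ^ 3 * (t - 0) := hkey
    have h5 : 8 * B * ε ^ 3 * t ≤ ε ^ 2 := by
      calc 8 * B * ε ^ 3 * t ≤ 8 * B * ε ^ 3 * T := by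
            apply mul_le_mul_of_nonneg_left ht.2; positivity
        _ = ε ^ 2 := hTmul
    have := abs_le.mp h4
    linarith [this.2]
  -- f ≤ 2ε on [0, T]
  have fbound : ∀ t ∈ Set.Icc (0:ℝ) T, f t ≤ 2 * ε := by
    by_contra hcon
    push_neg at hcon
    obtain ⟨t₁, ht₁, ht₁f⟩ := hcon
    set S : Set ℝ := {t | t ∈ Set.Icc (0:ℝ) T ∧ 2 * ε < f t} with hSdef
    have hSne : S.Nonempty := ⟨t₁, ht₁, ht₁f⟩
    have hSbdd : BddBelow S := ⟨0, fun x hx => hx.1.1⟩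
    set t₀ : ℝ := sInf S with ht₀def
    have hconts : ContinuousOn f (Set.Icc 0 T) :=
      fun x hx => ((hfderiv x hx.1).continuousWithinAt).mono (fun y hy => hy.1)
    have hCclosed : IsClosed {x ∈ Set.Icc (0:ℝ) T | 2 * ε ≤ f x} := by
      have := hconts.preimage_isClosed_of_isClosed isClosed_Icc (isClosed_Ici (a := 2 * ε))
      exact this
    have hSsub : S ⊆ {x ∈ Set.Icc (0:ℝ) T | 2 * ε ≤ f x} :=
      fun x hx => ⟨hx.1, le_of_lt hx.2⟩
    have ht₀mem : t₀ ∈ {x ∈ Set.Icc (0:ℝ) T | 2 * ε ≤ f x} := by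
      have h1 : t₀ ∈ closure S := csInf_mem_closure hSne hSbdd
      exact hCclosed.closure_subset ((closure_mono hSsub).trans
        (by rw [hCclosed.closure_eq]) h1)
    have ht₀Icc : t₀ ∈ Set.Icc (0:ℝ) T := ht₀mem.1
    have hft₀ : 2 * ε ≤ f t₀ := ht₀mem.2
    -- for s < t₀, f s ≤ 2ε
    have hbefore : ∀ s ∈ Set.Ico (0:ℝ) t₀, f s ≤ 2 * ε := by
      intro s hs
      by_contra h
      push_neg at h
      have : s ∈ S := ⟨⟨hs.1, le_trans (le_of_lt hs.2) ht₀Icc.2⟩, h⟩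
      exact absurd (csInf_le hSbdd this) (not_le.mpr hs.2)
    -- bound f t₀
    have hkey := norm_image_sub_le_of_norm_deriv_le_segment'
      (f := f) (f' := f') (a := 0) (b := t₀) (C := 2 * ε ^ 2)
      (fun x hx => (hfderiv x hx.1).mono (fun y hy => hy.1))
      (fun x hx => by
        have hr2 : r x ≤ 2 * ε ^ 2 := by
          apply rbound x ⟨hx.1, le_trans (le_of_lt hx.2) ht₀Icc.2⟩
          intro s hs
          exact hbefore s ⟨hs.1, lt_trans hs.2 hx.2⟩
        calc ‖f' x‖ = |f' x| := rfl
          _ ≤ r x := hf' x hx.1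
          _ ≤ 2 * ε ^ 2 := hr2) t₀ ⟨ht₀Icc.1, le_refl _⟩
    have h4 : |f t₀ - f 0| ≤ 2 * ε ^ 2 * (t₀ - 0) := hkey
    have h5 : 2 * ε ^ 2 * t₀ ≤ 2 * ε ^ 2 * T := by
      apply mul_le_mul_of_nonneg_left ht₀Icc.2; positivity
    have h6 : 2 * ε ^ 2 * T < ε := by
      have h7 : 2 * ε ^ 2 * T = ε / (4 * B) := by rw [hTdef]; field_simp; ring
      rw [h7]
      rw [div_lt_iff₀ (by positivity)]
      nlinarith
    have := abs_le.mp h4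
    linarith [this.2]
  intro t ht
  exact rbound t ht (fun s hs => fbound s ⟨hs.1, le_trans (le_of_lt hs.2) ht.2⟩)
end

section
/- Let (X, d) be a metric space equipped with a probability measure μ, and let φ : ℝ → X → X be a family of measurable maps. Let γ ∈ ℝ and let m, c₀, K₁, K₂, C₀, C, ε₀ be positive real numbers. Suppose a : X → ℝ is measurable with 0 ≤ a ≤ 1, Lipschitz with constant K₁, and ∫ a dμ ≥ m. Suppose that for every ε ∈ (0, ε₀) there is a measurable function b_ε : X → ℝ with 0 ≤ b_ε ≤ 1, Lipschitz with constant K₂/ε², with ∫ b_ε dμ ≥ c₀·ε⁸, such that a(x)·b_ε(φ(1/(C₀ε))(x)) = 0 for all x ∈ X, and such that the decay-of-correlations bound |∫ a·(b_ε ∘ φ(t)) dμ − (∫ a dμ)(∫ b_ε dμ)| ≤ C·t^{−γ}·(1 + K₁)·(1 + K₂/ε²) holds for all t ≥ 1. Then γ ≤ 10. -/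
open MeasureTheory

/-- Abstract form of the main argument of Theorem A: given an observable `a`
(bounded, Lipschitz with constant `K₁`, of integral at least `m`) and, for each
small `ε`, an observable `b_ε` (bounded, Lipschitz with constant `K₂/ε²`, of
integral at least `c₀·ε⁸`) with `a·(b_ε ∘ φ(1/(C₀ε))) ≡ 0`, a polynomial
decay-of-correlations bound with exponent `γ` forces `γ ≤ 10`. -/
theorem rate_of_mixing_at_most_polynomial
    {X : Type*} [MetricSpace X] [MeasurableSpace X]
    (μ : Measure X) [IsProbabilityMeasure μ]
    (φ : ℝ → X → X) (hφ : ∀ t : ℝ, Measurable (φ t))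
    (γ m c₀ K₁ K₂ C₀ C ε₀ : ℝ)
    (hm : 0 < m) (hc₀ : 0 < c₀) (hK₁ : 0 < K₁) (hK₂ : 0 < K₂)
    (hC₀ : 0 < C₀) (hC : 0 < C) (hε₀ : 0 < ε₀)
    (a : X → ℝ) (ha_meas : Measurable a)
    (ha01 : ∀ x, 0 ≤ a x ∧ a x ≤ 1)
    (ha_lip : ∀ x y, |a x - a y| ≤ K₁ * dist x y)
    (ha_int : m ≤ ∫ x, a x ∂μ)
    (hb : ∀ ε ∈ Set.Ioo (0:ℝ) ε₀, ∃ b : X → ℝ,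
      Measurable b ∧
      (∀ x, 0 ≤ b x ∧ b x ≤ 1) ∧
      (∀ x y, |b x - b y| ≤ (K₂ / ε ^ 2) * dist x y) ∧
      c₀ * ε ^ 8 ≤ ∫ x, b x ∂μ ∧
      (∀ x, a x * b (φ (1 / (C₀ * ε)) x) = 0) ∧
      (∀ t : ℝ, 1 ≤ t →
        |(∫ x, a x * b (φ t x) ∂μ) - (∫ x, a x ∂μ) * (∫ x, b x ∂μ)| ≤
          C * t ^ (-γ) * (1 + K₁) * (1 + K₂ / ε ^ 2))) :
    γ ≤ 10 := by
  by_contra hγ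
  push_neg at hγ
  set s := γ - 10 with hs
  have hs0 : 0 < s := by simp [hs]; linarith
  set D := C * C₀ ^ γ * (1 + K₁) * (1 + K₂) with hD
  have hC₀γ : 0 < C₀ ^ γ := Real.rpow_pos_of_pos hC₀ _
  have hD0 : 0 < D := by positivity
  set δ := m * c₀ / D with hδ
  have hδ0 : 0 < δ := by positivity
  have hδs : 0 < δ ^ (1/s) := Real.rpow_pos_of_pos hδ0 _
  set ε := min (min (ε₀/2) (min 1 (1/C₀))) (δ ^ (1/s) / 2) with hε
  have hε0 : 0 < ε := by positivity
  have hεε₀ : ε < ε₀ := lt_of_le_of_lt ((min_le_left _ _).trans (min_le_left _ _)) (by linarith)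
  have hε1 : ε ≤ 1 := (min_le_left _ _).trans ((min_le_right _ _).trans (min_le_left _ _))
  have hεC : ε ≤ 1/C₀ := (min_le_left _ _).trans ((min_le_right _ _).trans (min_le_right _ _))
  have hεδ : ε < δ ^ (1/s) := lt_of_le_of_lt (min_le_right _ _) (by linarith)
  obtain ⟨b, hb_meas, hb01, hb_lip, hb_int, hzero, hdecay⟩ := hb ε ⟨hε0, hεε₀⟩
  have hC₀ε : 0 < C₀ * ε := by positivity
  have hC₀ε1 : C₀ * ε ≤ 1 := by
    have := mul_le_mul_of_nonneg_left hεC hC₀.le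
    rwa [mul_one_div, div_self hC₀.ne'] at this
  have ht1 : (1:ℝ) ≤ 1 / (C₀ * ε) := by rw [le_div_iff₀ hC₀ε]; linarith
  have hd := hdecay (1 / (C₀ * ε)) ht1
  have h0 : (∫ x, a x * b (φ (1 / (C₀ * ε)) x) ∂μ) = 0 := by
    simp only [hzero, integral_zero]
  rw [h0, zero_sub, abs_neg, abs_of_nonneg] at hd
  · have hABge : m * (c₀ * ε ^ 8) ≤ (∫ x, a x ∂μ) * (∫ x, b x ∂μ) :=
      mul_le_mul ha_int hb_int (by positivity) (hm.le.trans ha_int)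
    have hrpow : (1 / (C₀ * ε) : ℝ) ^ (-γ) = C₀ ^ γ * ε ^ γ := by
      rw [one_div, Real.rpow_neg (by positivity), Real.inv_rpow hC₀ε.le, inv_inv,
        Real.mul_rpow hC₀.le hε0.le]
    rw [hrpow] at hd
    have hεγ : 0 < ε ^ γ := Real.rpow_pos_of_pos hε0 _
    have hK₂ε : 1 + K₂ / ε ^ 2 ≤ (1 + K₂) / ε ^ 2 := by
      rw [add_div]
      have hε2 : ε ^ 2 ≤ 1 := by nlinarith
      have : (1:ℝ) ≤ 1 / ε ^ 2 := by
        rw [le_div_iff₀ (by positivity)]; linarith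
      linarith
    have key : m * (c₀ * ε ^ 8) ≤ D * ε ^ γ / ε ^ 2 := by
      have h1 : C * (C₀ ^ γ * ε ^ γ) * (1 + K₁) * (1 + K₂ / ε ^ 2) ≤
          C * (C₀ ^ γ * ε ^ γ) * (1 + K₁) * ((1 + K₂) / ε ^ 2) := by
        apply mul_le_mul_of_nonneg_left hK₂ε (by positivity)
      calc m * (c₀ * ε ^ 8) ≤ (∫ x, a x ∂μ) * (∫ x, b x ∂μ) := hABge
        _ ≤ C * (C₀ ^ γ * ε ^ γ) * (1 + K₁) * (1 + K₂ / ε ^ 2) := hd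
        _ ≤ C * (C₀ ^ γ * ε ^ γ) * (1 + K₁) * ((1 + K₂) / ε ^ 2) := h1
        _ = D * ε ^ γ / ε ^ 2 := by rw [hD]; ring
    have key2 : m * c₀ * ε ^ (10:ℕ) ≤ D * ε ^ γ := by
      have := mul_le_mul_of_nonneg_right key (le_of_lt (by positivity : (0:ℝ) < ε ^ 2))
      rw [div_mul_cancel₀ _ (by positivity : (ε:ℝ) ^ 2 ≠ 0)] at this
      calc m * c₀ * ε ^ (10:ℕ) = m * (c₀ * ε ^ 8) * ε ^ 2 := by ring
        _ ≤ D * ε ^ γ := this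
    have hsplit : ε ^ γ = ε ^ s * ε ^ (10:ℕ) := by
      rw [← Real.rpow_natCast ε 10, ← Real.rpow_add hε0]
      norm_num [hs]
    have key3 : m * c₀ ≤ D * ε ^ s := by
      rw [hsplit] at key2
      have hε10 : (0:ℝ) < ε ^ (10:ℕ) := by positivity
      have := (mul_le_mul_iff_left₀ hε10).mp (by linarith [key2] : m * c₀ * ε ^ (10:ℕ) ≤ D * ε ^ s * ε ^ (10:ℕ))
      exact this
    have hεsδ : ε ^ s < δ := by
      have := Real.rpow_lt_rpow hε0.le hεδ hs0
      rwa [← Real.rpow_mul hδ0.le, one_div, inv_mul_cancel₀ hs0.ne', Real.rpow_one] at this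
    have hlast : D * ε ^ s < D * δ := by
      exact (mul_lt_mul_iff_right₀ hD0).mpr hεsδ
    have hDδ : D * δ = m * c₀ := by
      rw [hδ]; field_simp
    rw [hDδ] at hlast
    linarith
  · exact mul_nonneg (hm.le.trans ha_int) ((by positivity : (0:ℝ) ≤ c₀ * ε ^ 8).trans hb_int)
end
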